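/- Every partial conjugate of a simple k-power is k-power-free (k ≥ 2). -/

import Mathlib

/-- `p^k`: the word `p` concatenated `k` times. -/
def listPow {α : Type*} (p : List α) (k : ℕ) : List α := (List.replicate k p).flatten

/-- A `k`-power is a nonempty word of the form `p^k`. -/
def IsKPower {α : Type*} (k : ℕ) (w : List α) : Prop := ∃ p : List α, p ≠ [] ∧ w = listPow p k

/-- A word is `k`-power-free if none of its factors is a `k`-power. -/
def KPowerFree {α : Type*} (k : ℕ) (w : List α) : Prop :=
  ∀ y : List α, y <:+: w → ¬ IsKPower k y

/-- A simple `k`-power: a `k`-power none of whose proper factors is a `k`-power. -/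
def SimpleKPower {α : Type*} (k : ℕ) (w : List α) : Prop :=
  IsKPower k w ∧ ∀ y : List α, y <:+: w → y ≠ w → ¬ IsKPower k y

/-- The `i`-th partial conjugate: shift left cyclically by `i`, then drop the last symbol. -/
def cyc {α : Type*} (i : ℕ) (w : List α) : List α := (w.rotate i).dropLast

lemma listPow_succ {α : Type*} (p : List α) (k : ℕ) : listPow p (k+1) = p ++ listPow p k := by
  simp [listPow, List.replicate_succ]

lemma listPow_length {α : Type*} (p : List α) (k : ℕ) : (listPow p k).length = k * p.length := by
  induction k with
  | zero => simp [listPow]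
  | succ k ih => rw [listPow_succ, List.length_append, ih, Nat.succ_mul]; ring

lemma listPow_getElem {α : Type*} (p : List α) (hn : 0 < p.length) (k t : ℕ)
    (ht : t < k * p.length) :
    (listPow p k)[t]'(by rw [listPow_length]; exact ht) = p[t % p.length]'(Nat.mod_lt _ hn) := by
  induction k generalizing t with
  | zero => omega
  | succ k ih =>
    have h : (listPow p (k+1))[t]'(by rw [listPow_length]; exact ht)
        = (p ++ listPow p k)[t]'(by simp [listPow_length, ← listPow_succ]; omega) := by
      congr 1 <;> rw [listPow_succ]
    rw [h, List.getElem_append]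
    split
    · next h' => congr 1; exact (Nat.mod_eq_of_lt h').symm
    · next h' =>
      push_neg at h'
      have ht' : t - p.length < k * p.length := by
        rw [Nat.succ_mul] at ht; omega
      rw [ih _ ht']
      congr 1
      conv_rhs => rw [Nat.mod_eq_sub_mod h']

lemma listPow_getElem' {α : Type*} (p : List α) (hn : 0 < p.length) (k t : ℕ)
    (h : t < (listPow p k).length) :
    (listPow p k)[t]'h = p[t % p.length]'(Nat.mod_lt _ hn) :=
  listPow_getElem p hn k t (by rwa [listPow_length] at h)

lemma infix_index {α : Type*} {y v : List α} (h : y <:+: v) :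
    ∃ s, ∃ _ : s + y.length ≤ v.length, ∀ j (hj : j < y.length),
      y[j]'hj = v[s + j]'(by omega) := by
  obtain ⟨t, u, rfl⟩ := h
  refine ⟨t.length, by simp, fun j hj => ?_⟩
  rw [List.getElem_append_left (by simp; omega), List.getElem_append_right (by omega)]
  congr 1
  omega

lemma take_drop_infix {α : Type*} (w : List α) (a L : ℕ) : (w.drop a).take L <:+: w :=
  (List.take_prefix L (w.drop a)).isInfix.trans (List.drop_suffix a w).isInfix

lemma add_mod_right_mod (n a b : ℕ) : (a + b % n) % n = (a + b) % n := by
  conv_lhs => rw [Nat.add_mod]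
  rw [Nat.mod_mod_of_dvd _ (dvd_refl n), ← Nat.add_mod]

lemma mod_add_cong (n a b j : ℕ) (h : a % n = b % n) : (a + j) % n = (b + j) % n := by
  rw [Nat.add_mod a, Nat.add_mod b, h]

lemma getElem_congr_idx' {α : Type*} (l : List α) {i j : ℕ} (h : i = j) (hi : i < l.length) :
    l[i]'hi = l[j]'(h ▸ hi) := by subst h; rfl

/-- Every partial conjugate of a simple `k`-power is `k`-power-free. -/
theorem cyc_kPowerFree {α : Type*} (k : ℕ) (hk : 2 ≤ k) (w : List α)
    (hw : SimpleKPower k w) : ∀ i : ℕ, KPowerFree k (cyc i w) := by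
  obtain ⟨⟨p, hp, rfl⟩, hsimp⟩ := hw
  intro i y hyin hyk
  obtain ⟨q, hq, rfl⟩ := hyk
  obtain ⟨k', rfl⟩ : ∃ k', k = k' + 2 := ⟨k - 2, by omega⟩
  set k := k' + 2 with hk_def
  have hkpos : 0 < k := by omega
  have hn : 0 < p.length := List.length_pos_iff.mpr hp
  have hm : 0 < q.length := List.length_pos_iff.mpr hq
  obtain ⟨f, hf⟩ : ∃ f : ℕ → α, ∀ t, f t = p[t % p.length]'(Nat.mod_lt _ hn) :=
    ⟨_, fun _ => rfl⟩
  have hf_res : ∀ t u : ℕ, t % p.length = u % p.length → f t = f u := by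
    intro t u h
    rw [hf, hf]
    exact getElem_congr_idx' p h _
  have Pn : ∀ t, f (t + p.length) = f t := fun t =>
    hf_res _ _ (Nat.add_mod_right t p.length)
  have hW_get : ∀ t (ht : t < (listPow p k).length), (listPow p k)[t]'ht = f t := by
    intro t ht
    rw [listPow_getElem' p hn k t ht, hf]
  have hcyclen : (cyc i (listPow p k)).length = k * p.length - 1 := by
    simp [cyc, listPow_length]
  have hcyc_get : ∀ j (hj : j < (cyc i (listPow p k)).length),
      (cyc i (listPow p k))[j]'hj = f (i + j) := by
    intro j hj
    show ((listPow p k).rotate i).dropLast[j]'(by simpa [cyc] using hj) = f (i + j)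
    rw [List.getElem_dropLast, List.getElem_rotate, listPow_getElem' p hn, hf]
    apply getElem_congr_idx'
    rw [listPow_length, Nat.mod_mod_of_dvd _ (dvd_mul_left p.length k), Nat.add_comm]
  -- extract occurrence data
  obtain ⟨s, hb, hocc⟩ := infix_index hyin
  have hbm : s + k * q.length ≤ k * p.length - 1 := by
    rwa [listPow_length, hcyclen] at hb
  have hknpos : 0 < k * p.length := Nat.mul_pos hkpos hn
  have hkm : k * q.length ≤ k * p.length - 1 := by omega
  set s₀ := (s + i) % p.length with hs₀def
  have hs₀ : s₀ < p.length := Nat.mod_lt _ hn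
  have Hq : ∀ j, j < k * q.length →
      f (s₀ + j) = q[j % q.length]'(Nat.mod_lt _ hm) := by
    intro j hj
    have h1 := hocc j (by rw [listPow_length]; exact hj)
    rw [listPow_getElem' q hm] at h1
    rw [hcyc_get (s + j) (by rw [hcyclen]; omega)] at h1
    rw [h1]
    apply hf_res
    have e : i + (s + j) = (s + i) + j := by omega
    rw [e]
    apply mod_add_cong
    rw [hs₀def]
    exact Nat.mod_mod_of_dvd _ (dvd_refl p.length)
  have B : ∀ j, j < (k' + 1) * q.length → f (s₀ + j + q.length) = f (s₀ + j) := by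
    intro j hj
    have e1 : (k' + 1) * q.length + q.length = k * q.length := by rw [hk_def]; ring
    have h1 := Hq (j + q.length) (by omega)
    have h2 := Hq j (by omega)
    rw [← Nat.add_assoc] at h1
    rw [h1, h2]
    exact getElem_congr_idx' q (Nat.add_mod_right j q.length) _
  -- the key: a k-power proper factor of w gives a contradiction
  have key : ∀ (a L : ℕ), 0 < L → L < p.length → a + k * L ≤ k * p.length →
      (∀ j, j < k * L → f (a + j) = f (a + j % L)) → False := by
    intro a L hL hLn hfit hper
    have hLkL : L ≤ k * L := Nat.le_mul_of_pos_left _ hkpos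
    set z := ((listPow p k).drop a).take L with hz
    have hzlen : z.length = L := by
      rw [hz, List.length_take, List.length_drop, listPow_length]
      omega
    have hzpos : z ≠ [] := by
      rw [← List.length_pos_iff, hzlen]; exact hL
    have hzget : ∀ t (ht : t < L), z[t]'(by omega) = f (a + t) := by
      intro t ht
      have hzt : t < (List.take L (List.drop a (listPow p k))).length := by
        rw [← hz, hzlen]; exact ht
      show (List.take L (List.drop a (listPow p k)))[t]'hzt = f (a + t)
      rw [List.getElem_take, List.getElem_drop, hW_get]
    have hy : listPow z k = ((listPow p k).drop a).take (k * L) := by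
      apply List.ext_getElem
      · rw [listPow_length, hzlen, List.length_take, List.length_drop, listPow_length]
        omega
      · intro j h1 h2
        have hj : j < k * L := by rwa [listPow_length, hzlen] at h1
        rw [listPow_getElem' z (by rw [hzlen]; exact hL)]
        rw [getElem_congr_idx' z (by rw [hzlen]) _]
        rw [hzget (j % L) (Nat.mod_lt _ hL)]
        rw [List.getElem_take, List.getElem_drop, hW_get]
        exact (hper j hj).symm
    have hinf : listPow z k <:+: listPow p k := hy ▸ take_drop_infix _ a (k * L)
    have hne : listPow z k ≠ listPow p k := by
      intro hEq
      have hlen := congrArg List.length hEq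
      rw [listPow_length, listPow_length, hzlen] at hlen
      have : L = p.length := Nat.eq_of_mul_eq_mul_left hkpos hlen
      omega
    exact hsimp _ hinf hne ⟨z, hzpos, rfl⟩
  by_cases hA : p.length ≤ (k' + 1) * q.length
  · -- big q: f gets global period q.length, then gcd period, contradicting L < n or length
    have Pm : ∀ t, f (t + q.length) = f t := by
      intro t
      set j := (t + p.length - s₀) % p.length with hj
      have hjn : j < p.length := Nat.mod_lt _ hn
      have hcong : (s₀ + j) % p.length = t % p.length := by
        rw [hj, add_mod_right_mod]
        have e : s₀ + (t + p.length - s₀) = t + p.length := by omega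
        rw [e, Nat.add_mod_right]
      have h1 := B j (lt_of_lt_of_le hjn hA)
      have e1 : f (s₀ + j + q.length) = f (t + q.length) :=
        hf_res _ _ (mod_add_cong _ _ _ _ hcong)
      have e2 : f (s₀ + j) = f t := hf_res _ _ hcong
      rw [← e1, h1, e2]
    set P : ℕ → Prop := fun d => ∀ t, f (t + d) = f t with hP
    have Psub : ∀ d e, P d → P e → e ≤ d → P (d - e) := by
      intro d e hd he hle t
      have h1 : f (t + (d - e) + e) = f (t + (d - e)) := he _
      have e1 : t + (d - e) + e = t + d := by omega
      rw [e1] at h1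
      rw [← h1, hd]
    have Pmul : ∀ c d, P d → P (c * d) := by
      intro c d hd
      induction c with
      | zero => intro t; simp
      | succ c ih =>
        intro t
        have e1 : t + (c + 1) * d = t + c * d + d := by ring
        rw [e1, hd, ih]
    have Pgcd : ∀ d e, P d → P e → P (Nat.gcd d e) := by
      intro d e
      induction d, e using Nat.gcd.induction with
      | H0 e => intro _ he; simpa using he
      | H1 d e hd ih =>
        intro hpd hpe
        rw [Nat.gcd_rec]
        apply ih ?_ hpd
        have e1 : e % d = e - e / d * d := by
          have := Nat.mod_add_div' e d
          omega
        rw [e1]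
        exact Psub e (e / d * d) hpe (Pmul (e / d) d hpd) (Nat.div_mul_le_self e d)
    have Pg : P (Nat.gcd p.length q.length) := Pgcd _ _ Pn Pm
    have hgpos : 0 < Nat.gcd p.length q.length := Nat.gcd_pos_of_pos_left _ hn
    have hgn : Nat.gcd p.length q.length ≤ p.length :=
      Nat.le_of_dvd hn (Nat.gcd_dvd_left _ _)
    rcases eq_or_lt_of_le hgn with hEq | hlt
    · have hdvd : p.length ∣ q.length := hEq ▸ Nat.gcd_dvd_right p.length q.length
      have hnm : p.length ≤ q.length := Nat.le_of_dvd hm hdvd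
      have h2 : k * p.length ≤ k * q.length := by gcongr
      omega
    · apply key 0 (Nat.gcd p.length q.length) hgpos hlt (by simpa using by gcongr)
      intro j hj
      simp only [Nat.zero_add]
      conv_lhs => rw [← Nat.mod_add_div' j (Nat.gcd p.length q.length)]
      exact Pmul (j / Nat.gcd p.length q.length) _ Pg _
  · push_neg at hA
    have hmn : q.length < p.length := by
      have : q.length ≤ (k' + 1) * q.length := Nat.le_mul_of_pos_left _ (by omega)
      omega
    by_cases hE : s₀ + k * q.length ≤ k * p.length
    · apply key s₀ q.length hm hmn hE
      intro j hj
      have hjm : j % q.length < k * q.length :=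
        lt_of_lt_of_le (Nat.mod_lt _ hm) (Nat.le_mul_of_pos_left _ hkpos)
      rw [Hq j hj, Hq (j % q.length) hjm]
      exact getElem_congr_idx' q ((Nat.mod_mod_of_dvd _ (dvd_refl q.length)).symm) _
    · push_neg at hE
      set d := p.length - q.length with hd
      have hdpos : 0 < d := by omega
      have ekd : k * p.length = k * q.length + k * d := by
        have e : p.length = q.length + d := by omega
        rw [e, Nat.mul_add]
      have hs₀kd : k * d < s₀ := by omega
      have e2 : k * d = (k' + 1) * d + d := by rw [hk_def]; ring
      have hkd1 : (k' + 1) * d < q.length := by omega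
      have hdm : d ≤ q.length := by
        have : d ≤ (k' + 1) * d := Nat.le_mul_of_pos_left _ (by omega)
        omega
    -- a = s₀ - d
      set a := s₀ - d with ha
      have had : a + d = s₀ := by omega
      have Bd : ∀ u, u < (k' + 1) * d → f (a + u + d) = f (a + u) := by
        intro u hu
        have h1 : f (s₀ + u + q.length) = f (s₀ + u) :=
          B u (lt_of_lt_of_le hu (by gcongr))
        have h2 : f (a + u + p.length) = f (a + u) := Pn _
        have e1 : a + u + p.length = s₀ + u + q.length := by omega
        have e3 : a + u + d = s₀ + u := by omega
        rw [e3, ← h1, ← e1, h2]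
      have per : ∀ j, j < k * d → f (a + j) = f (a + j % d) := by
        intro j
        induction j using Nat.strong_induction_on with
        | _ j ih =>
          intro hj
          by_cases hjd : j < d
          · rw [Nat.mod_eq_of_lt hjd]
          · push_neg at hjd
            have h1 : f (a + (j - d) + d) = f (a + (j - d)) := Bd (j - d) (by omega)
            have e3 : a + (j - d) + d = a + j := by omega
            rw [e3] at h1
            rw [h1, ih (j - d) (by omega) (by omega)]
            congr 1
            rw [Nat.mod_eq_sub_mod hjd]
      have hfit : a + k * d ≤ k * p.length := by
        have h2n : 2 * p.length ≤ k * p.length := by gcongr <;> omega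
        omega
      exact key a d hdpos (by omega) hfit per
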